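/- Let X be a spiny symmetric set, x ∈ Xₙ an n-simplex with matrix form (x_{ij}) = μ_X(x). Then x is nondegenerate if and only if no row of the matrix (x_{ij}) contains a repeated element. -/

import Mathlib

open CategoryTheory Opposite

/-- The skeleton of the category of finite nonempty sets: objects are natural
numbers `n`, standing for `[n] = {0, …, n}`, morphisms are all functions. -/
def Ups : Type := ℕ

/-- The natural number underlying an object of `Ups`. -/
def Ups.toNat : Ups → ℕ := fun n => n

/-- The object `[n]` of `Ups`. -/
def Ups.of : ℕ → Ups := fun n => n

instance : Category Ups where
  Hom n m := Fin (n.toNat + 1) → Fin (m.toNat + 1)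
  id _ := _root_.id
  comp f g := g ∘ f

/-- A symmetric set is a presheaf on `Ups`. -/
abbrev SymmSet := Upsᵒᵖ ⥤ Type

/-- The map `ε_{ij} : [1] → [n]` sending `0, 1` to `i, j`. -/
def eps (n : ℕ) (i j : Fin (n + 1)) : Ups.of 1 ⟶ Ups.of n :=
  fun k => if k = 0 then i else j

/-- The set of `n`-simplices of a symmetric set. -/
abbrev simp (X : SymmSet) (n : ℕ) : Type := X.obj (op (Ups.of n))

/-- The Bousfield–Segal map `𝓑ₙ : Xₙ → X₁ⁿ`, `x ↦ (ε₀₁*x, …, ε₀ₙ*x)`. -/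
def BS (X : SymmSet) (n : ℕ) (x : simp X n) : Fin n → simp X 1 :=
  fun k => X.map (eps n 0 k.succ).op x

/-- The Segal map `𝓔ₙ : Xₙ → X₁ⁿ`, `x ↦ (ε₀₁*x, ε₁₂*x, …, ε₍ₙ₋₁₎ₙ*x)`. -/
def ES (X : SymmSet) (n : ℕ) (x : simp X n) : Fin n → simp X 1 :=
  fun k => X.map (eps n k.castSucc k.succ).op x

/-- The canonical map `μ_X` to matrices, `x ↦ (ε_{ij}* x)_{ij}`. -/
def muMat (X : SymmSet) (n : ℕ) (x : simp X n) :
    Fin (n + 1) → Fin (n + 1) → simp X 1 :=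
  fun i j => X.map (eps n i j).op x

/-- A symmetric set is spiny if all Bousfield–Segal maps are injective. -/
def Spiny (X : SymmSet) : Prop := ∀ n, Function.Injective (BS X n)
/-- The matrix symmetric set `Mat(S)`: `n`-simplices are functions `[n]×[n] → S`. -/
def MatS (S : Type) : SymmSet where
  obj k := Fin (k.unop.toNat + 1) → Fin (k.unop.toNat + 1) → S
  map f := TypeCat.ofHom fun M => fun a b => M (f.unop a) (f.unop b)
  map_id := by intros; rfl
  map_comp := by intros; rfl

/-- An `n`-simplex is degenerate if it is `ρ* y` for a noninvertible surjection
`ρ : [n] ↠ [m]` and an `m`-simplex `y`. -/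
def Degen (X : SymmSet) (n : ℕ) (x : simp X n) : Prop :=
  ∃ (m : ℕ) (ρ : Ups.of n ⟶ Ups.of m), Function.Surjective ρ ∧
    ¬ Function.Bijective ρ ∧ ∃ y : simp X m, x = X.map ρ.op y

/-- The `d`-skeleton of a symmetric set, as a symmetric subset. -/
def skel (X : SymmSet) (d : ℕ) : SymmSet where
  obj k := {x : X.obj k // ∃ (i : ℕ) (_ : i ≤ d) (α : k.unop ⟶ Ups.of i)
      (y : simp X i), x = X.map α.op y}
  map f := TypeCat.ofHom fun x => ⟨X.map f x.1, by
    obtain ⟨i, hi, α, y, hy⟩ := x.2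
    refine ⟨i, hi, f.unop ≫ α, y, ?_⟩
    rw [hy, ← FunctorToTypes.map_comp_apply]
    rfl⟩
  map_id := by
    intro k; ext x
    simp
  map_comp := by
    intro k k' k'' f g; ext x
    simp

/-- A symmetric set is `d`-skeletal when all simplices above dimension `d`
are degenerate. -/
def SkeletalLE (X : SymmSet) (d : ℕ) : Prop :=
  ∀ n, d < n → ∀ x : simp X n, Degen X n x

/-- `X` has dimension `d` when `d` is the least integer such that `X` is
`d`-skeletal. -/
def HasDim (X : SymmSet) (d : ℕ) : Prop :=
  IsLeast {m | SkeletalLE X m} d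

/-- A symmetric set is reduced when it has exactly one `0`-simplex. -/
def Reduced (X : SymmSet) : Prop :=
  Nonempty (simp X 0) ∧ Subsingleton (simp X 0)

/-- A partial group is a reduced spiny symmetric set. -/
def IsPartialGroup (X : SymmSet) : Prop := Reduced X ∧ Spiny X

/-- A partial group is trivial when it has no nonidentity elements. -/
def TrivialPG (X : SymmSet) : Prop := Subsingleton (simp X 1)

/-- The order of a partial group: the number of its elements (edges). -/
noncomputable def orderPG (X : SymmSet) : ℕ := Nat.card (simp X 1)

/-- An edge is an identity if it is in the image of the degeneracy `X₀ → X₁`. -/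
def isIdent (X : SymmSet) (e : simp X 1) : Prop :=
  ∃ v : simp X 0, e = X.map (Quiver.Hom.op
    ((fun _ => 0 : Fin 2 → Fin 1) : Ups.of 1 ⟶ Ups.of 0)) v

/-- The source vertex of an edge. -/
def srcE (X : SymmSet) (e : simp X 1) : simp X 0 :=
  X.map (Quiver.Hom.op ((fun _ => 0 : Fin 1 → Fin 2) : Ups.of 0 ⟶ Ups.of 1)) e

/-- `X` has (higher Segal) degree at most `k`: for each starry word `w` of
length `n+1 ≥ k+1`, if the last `k+1` faces `d_{n+1-k} w, …, d_{n+1} w` of `w`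
are Bousfield–Segal images of simplices, then so is `w`. -/
def HasDegLE (X : SymmSet) (k : ℕ) : Prop :=
  ∀ n, k ≤ n → ∀ w : Fin (n + 1) → simp X 1,
    (∀ a b, srcE X (w a) = srcE X (w b)) →
    (∀ i : Fin (n + 1), n ≤ (i : ℕ) + k →
      (fun j : Fin n => w (i.succAbove j)) ∈ Set.range (BS X n)) →
    w ∈ Set.range (BS X (n + 1))

/-- `X` has degree `d`: `d` is the least `k ≥ 1` with `HasDegLE X k`. -/
def DegreeIs (X : SymmSet) (d : ℕ) : Prop :=
  IsLeast {k | 1 ≤ k ∧ HasDegLE X k} d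

/-- `W`, with structure maps `i, j`, is a coproduct of `Y` and `Z` in the
category of partial groups. -/
def IsPGCoproduct (W Y Z : SymmSet) (i : Y ⟶ W) (j : Z ⟶ W) : Prop :=
  ∀ V : SymmSet, IsPartialGroup V → ∀ (f : Y ⟶ V) (g : Z ⟶ V),
    ∃! h : W ⟶ V, i ≫ h = f ∧ j ≫ h = g

/-- The nerve of a group `G`, as a symmetric set: an `n`-simplex is a matrix
`(g_{ij})` of elements of `G` satisfying the cocycle condition. -/
def grpNerve (G : Type) [Group G] : SymmSet where
  obj k := {M : Fin (k.unop.toNat + 1) → Fin (k.unop.toNat + 1) → G //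
      ∀ i j l, M i j * M j l = M i l}
  map f := TypeCat.ofHom fun M => ⟨fun a b => M.1 (f.unop a) (f.unop b),
    fun i j l => M.2 (f.unop i) (f.unop j) (f.unop l)⟩
  map_id := by intro k; rfl
  map_comp := by intros; rfl

/-- Pulling back twice equals pulling back along the composite. -/
lemma pull_pull (X : SymmSet) {a b c : ℕ} (f : Ups.of a ⟶ Ups.of b)
    (g : Ups.of b ⟶ Ups.of c) (x : simp X c) :
    X.map f.op (X.map g.op x) = X.map (f ≫ g).op x := by
  rw [op_comp, FunctorToTypes.map_comp_apply]

/-- Composing an `eps` with any map gives an `eps`. -/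
lemma eps_comp {n m : ℕ} (i j : Fin (n + 1)) (ρ : Ups.of n ⟶ Ups.of m) :
    eps n i j ≫ ρ = eps m (ρ i) (ρ j) := by
  funext k
  show ρ (eps n i j k) = eps m (ρ i) (ρ j) k
  unfold eps
  split <;> simp_all

/-- If a pullback of `x` along a bijection is degenerate, so is `x`. -/
lemma degen_of_pull {n : ℕ} (X : SymmSet) (g : Ups.of n ⟶ Ups.of n)
    (hg : Function.Bijective g) (x : simp X n)
    (h : Degen X n (X.map g.op x)) : Degen X n x := by
  obtain ⟨m, ρ, hs, hb, y, hy⟩ := h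
  let e := Equiv.ofBijective g hg
  let g' : Ups.of n ⟶ Ups.of n := ⇑e.symm
  have hg'g : g' ≫ g = 𝟙 (Ups.of n) := by
    funext u
    exact e.apply_symm_apply u
  have hx : x = X.map g'.op (X.map g.op x) := by
    rw [pull_pull, hg'g]
    simp
  refine ⟨m, g' ≫ ρ, ?_, ?_, y, ?_⟩
  · show Function.Surjective (ρ ∘ g')
    exact hs.comp e.symm.surjective
  · intro hbij
    have hρ : (g' ≫ ρ) ∘ g = ρ := by
      funext u
      show ρ (g' (g u)) = ρ u
      congr 1
      exact e.symm_apply_apply u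
    exact hb (hρ ▸ hbij.comp hg)
  · rw [hx, hy, pull_pull]

/-- The collapse map `[m+1] → [m]` sending both `k` and `j` to the same value. -/
def colδ (m kv : ℕ) (hkv : kv ≤ m + 1) (v : Fin (m + 2)) : Fin (m + 1) :=
  ⟨v.val - (if kv ≤ v.val then 1 else 0), by
    have := v.isLt; split_ifs <;> omega⟩

def colρ (m kv : ℕ) (hkv : kv ≤ m + 1) (j : Fin (m + 2)) :
    Ups.of (m + 1) ⟶ Ups.of m := fun l =>
  if l.val = kv then colδ m kv hkv j else colδ m kv hkv l

def colσ (m kv : ℕ) (hkv : kv ≤ m + 1) : Ups.of m ⟶ Ups.of (m + 1) := fun u =>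
  ⟨u.val + (if kv ≤ u.val then 1 else 0), by
    have h1 : (Ups.of m).toNat = m := rfl
    have h2 : (Ups.of (m + 1)).toNat = m + 1 := rfl
    have := u.isLt; split_ifs <;> omega⟩

lemma colρσ (m kv : ℕ) (hkv : kv ≤ m + 1) (j : Fin (m + 2)) (hj : j.val ≠ kv)
    (u : Fin (m + 1)) : colρ m kv hkv j (colσ m kv hkv u) = u := by
  simp only [colρ, colσ, colδ, Fin.ext_iff, apply_ite Fin.val, Ups.of, Ups.toNat]
  have := u.isLt
  split_ifs <;> simp_all <;> omega

lemma colσρ (m kv : ℕ) (hkv : kv ≤ m + 1) (hkv1 : 1 ≤ kv) (j : Fin (m + 2))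
    (hj : j.val ≠ kv) (l : Fin (m + 2)) :
    (colσ m kv hkv (colρ m kv hkv j l)).val = if l.val = kv then j.val else l.val := by
  simp only [colρ, colσ, colδ, apply_ite Fin.val, Ups.of, Ups.toNat]
  have := l.isLt
  have := j.isLt
  split_ifs <;> simp_all <;> omega

/-- Core case: a repeat in row 0, with collapsed index nonzero. -/
lemma degen_of_row0core (X : SymmSet) (hX : Spiny X) (m : ℕ)
    (x : simp X (m + 1)) (j k : Fin (m + 2)) (hk0 : k ≠ 0) (hjk : j ≠ k)
    (h : X.map (eps (m + 1) 0 j).op x = X.map (eps (m + 1) 0 k).op x) :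
    Degen X (m + 1) x := by
  have hkv1 : 1 ≤ k.val := by
    rcases Nat.eq_zero_or_pos k.val with hc | hc
    · exact absurd (Fin.ext (by simpa using hc)) hk0
    · exact hc
  have hkm : k.val ≤ m + 1 := by have := k.isLt; omega
  have hjv : j.val ≠ k.val := fun hc => hjk (Fin.ext hc)
  set ρ : Ups.of (m + 1) ⟶ Ups.of m := colρ m k.val hkm j with hρdef
  set σ : Ups.of m ⟶ Ups.of (m + 1) := colσ m k.val hkm with hσdef
  have hθ : ∀ l : Fin (m + 2),
      ((ρ ≫ σ : Ups.of (m + 1) ⟶ Ups.of (m + 1)) l).val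
        = if l.val = k.val then j.val else l.val := fun l =>
    colσρ m k.val hkm hkv1 j hjv l
  have hθ0 : (ρ ≫ σ : Ups.of (m + 1) ⟶ Ups.of (m + 1)) 0 = 0 := by
    apply Fin.ext
    erw [hθ 0]
    show (if (0:ℕ) = k.val then j.val else 0) = 0
    rw [if_neg (by omega)]
  have key : BS X (m + 1) (X.map (ρ ≫ σ).op x) = BS X (m + 1) x := by
    funext l
    show X.map (eps (m + 1) 0 l.succ).op (X.map (ρ ≫ σ).op x)
      = X.map (eps (m + 1) 0 l.succ).op x
    rw [pull_pull, eps_comp]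
    erw [hθ0]
    by_cases hc : (l.succ : Fin (m + 2)).val = k.val
    · have h1 : (ρ ≫ σ : Ups.of (m + 1) ⟶ Ups.of (m + 1)) l.succ = j := by
        apply Fin.ext; rw [hθ]; rw [if_pos hc]
      have h2 : (l.succ : Fin (m + 2)) = k := Fin.ext hc
      rw [h1, h2]
      exact h
    · have h1 : (ρ ≫ σ : Ups.of (m + 1) ⟶ Ups.of (m + 1)) l.succ = l.succ := by
        apply Fin.ext; rw [hθ]; rw [if_neg hc]
      rw [h1]
      rfl
  have hfix : X.map (ρ ≫ σ).op x = x := hX (m + 1) key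
  refine ⟨m, ρ, ?_, ?_, X.map σ.op x, ?_⟩
  · intro u
    exact ⟨σ u, colρσ m k.val hkm j hjv u⟩
  · intro hb
    apply hjk
    apply hb.1
    show colρ m k.val hkm j j = colρ m k.val hkm j k
    simp [colρ, hjv]; rfl
  · rw [pull_pull, hfix]

/-- A repeat in row 0 implies degeneracy. -/
lemma degen_of_row0 (X : SymmSet) (hX : Spiny X) (n : ℕ) (x : simp X n)
    (j k : Fin (n + 1)) (hjk : j ≠ k)
    (h : X.map (eps n 0 j).op x = X.map (eps n 0 k).op x) :
    Degen X n x := by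
  obtain ⟨m, rfl⟩ : ∃ m, n = m + 1 := by
    cases n with
    | zero =>
      exact absurd (Fin.ext (by have := j.isLt; have := k.isLt; omega)) hjk
    | succ m => exact ⟨m, rfl⟩
  by_cases hk : k = 0
  · have hj0 : j ≠ 0 := hk ▸ hjk
    exact degen_of_row0core X hX m x k j hj0 hjk.symm h.symm
  · exact degen_of_row0core X hX m x j k hk hjk h

/-- A repeat in any row implies degeneracy. -/
lemma degen_of_row (X : SymmSet) (hX : Spiny X) (n : ℕ) (x : simp X n)
    (i j k : Fin (n + 1)) (hjk : j ≠ k)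
    (h : X.map (eps n i j).op x = X.map (eps n i k).op x) :
    Degen X n x := by
  set s : Ups.of n ⟶ Ups.of n := ⇑(Equiv.swap (0 : Fin (n + 1)) i) with hs
  apply degen_of_pull X s (Equiv.swap (0 : Fin (n + 1)) i).bijective x
  apply degen_of_row0 X hX n _ (Equiv.swap (0 : Fin (n + 1)) i j)
    (Equiv.swap (0 : Fin (n + 1)) i k)
    (fun hc => hjk ((Equiv.swap (0 : Fin (n + 1)) i).injective hc))
  rw [pull_pull, pull_pull, eps_comp, eps_comp]
  show X.map (eps n (s 0) (s (Equiv.swap (0 : Fin (n + 1)) i j))).op x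
    = X.map (eps n (s 0) (s (Equiv.swap (0 : Fin (n + 1)) i k))).op x
  rw [hs]
  simp only [Equiv.swap_apply_left, Equiv.swap_apply_self]
  exact h

/-- In a spiny symmetric set, an `n`-simplex is nondegenerate if and only if no
row of its matrix form `μ_X(x) = (x_{ij})` contains a repeated element. -/
theorem nondegenerate_iff_rows_injective
    (X : SymmSet) (hX : Spiny X) (n : ℕ) (x : simp X n) :
    ¬ Degen X n x ↔
      ∀ i j k : Fin (n + 1), muMat X n x i j = muMat X n x i k → j = k := by
  constructor
  · intro hnd i j k hmu
    by_contra hjk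
    exact hnd (degen_of_row X hX n x i j k hjk hmu)
  · rintro H ⟨m, ρ, hs, hb, y, hy⟩
    have hni : ¬ Function.Injective ρ := fun hinj => hb ⟨hinj, hs⟩
    rw [Function.not_injective_iff] at hni
    obtain ⟨j, k, hjk, hne⟩ := hni
    apply hne
    apply H 0 j k
    show X.map (eps n 0 j).op x = X.map (eps n 0 k).op x
    rw [hy, pull_pull, pull_pull]
    erw [eps_comp, eps_comp, hjk]
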